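/- (Alzer–Kwong) For every positive integer m and natural numbers ν, ℓ with 0 ≤ ν ≤ m and 0 ≤ ℓ ≤ m−ν−2, one has ∑_{k=0, k+m odd}^{m-1} C(m,k)·C(k+m,ν)·C(k+m−ν, ℓ)·B_{k+m−ν−ℓ} = 0, where the sum runs only over those indices k in {0,…,m−1} for which k+m is odd. -/

import Mathlib

open Finset

namespace AlzerKwongAux

open Polynomial

/-- Coefficient of the Bernoulli polynomial. -/
lemma coeff_bernoulli_poly (n j : ℕ) (h : j ≤ n) :
    (Polynomial.bernoulli n).coeff j = _root_.bernoulli (n - j) * (n.choose j) := by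
  rw [Polynomial.bernoulli_def, Polynomial.finset_sum_coeff]
  simp only [Polynomial.coeff_monomial]
  rw [Finset.sum_ite_eq' (Finset.range (n + 1)) j]
  simp [Finset.mem_range, Nat.lt_succ_of_le h]

lemma coeff_comp_neg_X (p : ℚ[X]) (n : ℕ) :
    (p.comp (-X)).coeff n = (-1) ^ n * p.coeff n := by
  induction p using Polynomial.induction_on' with
  | add p q hp hq => simp [Polynomial.add_comp, hp, hq, mul_add]
  | monomial i a =>
    rw [Polynomial.monomial_comp, neg_pow]
    have : ((-1 : ℚ[X])) ^ i = Polynomial.C ((-1 : ℚ) ^ i) := by simp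
    rw [this, ← mul_assoc, ← Polynomial.C_mul, Polynomial.coeff_C_mul, Polynomial.coeff_X_pow,
      Polynomial.coeff_monomial]
    rcases eq_or_ne i n with h | h
    · subst h
      simp [mul_comm]
    · rw [if_neg (fun hh => h hh.symm), if_neg h]
      ring

lemma sum_choose_mul_pow (M : ℕ) (x : ℚ) :
    ∑ k ∈ Finset.range (M + 1), (M.choose k : ℚ) * x ^ k = (1 + x) ^ M := by
  have := add_pow x 1 M
  simp only [one_pow, mul_one] at this
  rw [show (1 + x) = (x + 1) by ring, this]
  exact Finset.sum_congr rfl fun k _ => by ring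

/-- The auxiliary polynomial `G_m`. -/
noncomputable def gP (m : ℕ) : ℚ[X] :=
  ∑ k ∈ Finset.range (m + 1), Polynomial.C (m.choose k : ℚ) * Polynomial.bernoulli (k + m)

lemma gP_eval (m : ℕ) (x : ℚ) :
    (gP m).eval x
      = ∑ k ∈ Finset.range (m + 1), (m.choose k : ℚ) * (Polynomial.bernoulli (k + m)).eval x := by
  simp [gP, Polynomial.eval_finset_sum]

/-- The difference polynomial evaluated. -/
noncomputable def rr (m : ℕ) (x : ℚ) : ℚ :=
  m * x ^ (m - 1) * (1 + x) ^ m + m * x ^ m * (1 + x) ^ (m - 1)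

lemma bern_odd_zero {n : ℕ} (h : Odd n) (h1 : 1 < n) : _root_.bernoulli n = 0 := by
  rw [bernoulli_eq_bernoulli'_of_ne_one (by omega)]
  exact bernoulli'_eq_zero_of_odd h h1

lemma sum_r (m : ℕ) (hm : 0 < m) (x : ℚ) :
    ∑ k ∈ Finset.range (m + 1), (m.choose k : ℚ) * (((k + m : ℕ) : ℚ) * x ^ (k + m - 1))
      = rr m x := by
  have hsplit : ∀ k : ℕ, (m.choose k : ℚ) * (((k + m : ℕ) : ℚ) * x ^ (k + m - 1))
      = (m.choose k : ℚ) * m * (x ^ (m - 1) * x ^ k)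
        + (m.choose k : ℚ) * k * (x ^ (m - 1) * x ^ k) := by
    intro k
    have h1 : k + m - 1 = (m - 1) + k := by omega
    rw [h1, pow_add]
    push_cast
    ring
  rw [Finset.sum_congr rfl fun k _ => hsplit k, Finset.sum_add_distrib]
  unfold rr
  congr 1
  · have h2 : ∀ k : ℕ, (m.choose k : ℚ) * m * (x ^ (m - 1) * x ^ k)
        = (m * x ^ (m - 1)) * ((m.choose k : ℚ) * x ^ k) := fun k => by ring
    rw [Finset.sum_congr rfl fun k _ => h2 k, ← Finset.mul_sum, sum_choose_mul_pow]
  · rw [Finset.sum_range_succ']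
    have h0 : (m.choose 0 : ℚ) * ((0 : ℕ) : ℚ) * (x ^ (m - 1) * x ^ 0) = 0 := by simp
    rw [h0, add_zero]
    have hterm : ∀ k : ℕ, k < m →
        (m.choose (k + 1) : ℚ) * ((k + 1 : ℕ) : ℚ) * (x ^ (m - 1) * x ^ (k + 1))
          = (m * x ^ m) * (((m - 1).choose k : ℚ) * x ^ k) := by
      intro k hk
      have hnat : m * (m - 1).choose k = m.choose (k + 1) * (k + 1) := by
        have h3 := Nat.add_one_mul_choose_eq (m - 1) k
        have hm1 : m - 1 + 1 = m := by omega
        rw [hm1] at h3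
        simpa [Nat.succ_eq_add_one] using h3
      have hq : ((m : ℚ)) * ((m - 1).choose k : ℚ)
          = (m.choose (k + 1) : ℚ) * ((k + 1 : ℕ) : ℚ) := by exact_mod_cast hnat
      have hx : x ^ (m - 1) * x ^ (k + 1) = x ^ m * x ^ k := by
        rw [← pow_add, ← pow_add]
        congr 1
        omega
      rw [hx, ← hq]
      ring
    rw [Finset.sum_congr rfl fun k hk => hterm k (Finset.mem_range.mp hk), ← Finset.mul_sum]
    have h4 : ∑ k ∈ Finset.range m, ((m - 1).choose k : ℚ) * x ^ k = (1 + x) ^ (m - 1) := by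
      have h5 := sum_choose_mul_pow (m - 1) x
      rwa [show m - 1 + 1 = m by omega] at h5
    rw [h4]

lemma step_A (m : ℕ) (hm : 0 < m) (x : ℚ) :
    (gP m).eval (1 + x) = (gP m).eval x + rr m x := by
  rw [gP_eval, gP_eval, ← sum_r m hm x]
  simp only [Polynomial.bernoulli_eval_one_add, mul_add, Finset.sum_add_distrib]

lemma step_B (m : ℕ) (hm : 0 < m) (x : ℚ) : rr m x + rr m (-1 - x) = 0 := by
  unfold rr
  have e2 : (1 + (-1 - x) : ℚ) = -x := by ring
  have e1 : (-1 - x : ℚ) = -(1 + x) := by ring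
  rw [e2, e1]
  rw [neg_pow (1 + x) (m - 1), neg_pow (1 + x) m, neg_pow x m, neg_pow x (m - 1)]
  have h : ((-1 : ℚ)) ^ (m - 1) * (-1 : ℚ) ^ m = -1 := by
    rw [← pow_add]
    exact Odd.neg_one_pow ⟨m - 1, by omega⟩
  linear_combination ((m : ℚ) * (1 + x) ^ (m - 1) * x ^ m + (m : ℚ) * (1 + x) ^ m * x ^ (m - 1)) * h

lemma g_even (m : ℕ) (hm : 0 < m) : ∀ n : ℕ, (gP m).eval (-(n : ℚ)) = (gP m).eval (n : ℚ) := by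
  intro n
  induction n with
  | zero => simp
  | succ n ih =>
    have h1 : ((n + 1 : ℕ) : ℚ) = 1 + (n : ℚ) := by push_cast; ring
    have h2 : (-(↑(n + 1) : ℚ)) = 1 + (-1 - (n : ℚ) - 1 + 0) := by push_cast; ring
    have hA1 := step_A m hm (n : ℚ)
    have hA2 := step_A m hm (-1 - (n : ℚ))
    have hB := step_B m hm (n : ℚ)
    have e3 : (1 + (-1 - (n : ℚ))) = -(n : ℚ) := by ring
    rw [e3] at hA2
    have e4 : (-(↑(n + 1) : ℚ)) = -1 - (n : ℚ) := by push_cast; ring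
    rw [e4, h1, hA1, ← ih]
    linarith [hA2, hB]

lemma gP_comp_neg (m : ℕ) (hm : 0 < m) : (gP m).comp (-X) = gP m := by
  apply Polynomial.eq_of_infinite_eval_eq
  apply Set.Infinite.mono (s := Set.range (fun n : ℕ => (n : ℚ)))
  · rintro _ ⟨n, rfl⟩
    simp only [Set.mem_setOf_eq, Polynomial.eval_comp, Polynomial.eval_neg, Polynomial.eval_X]
    exact g_even m hm n
  · exact Set.infinite_range_of_injective Nat.cast_injective

lemma key (m j : ℕ) (hm : 0 < m) (hj : Odd j) (hjm : j ≤ m) :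
    ∑ k ∈ Finset.range (m + 1),
      (m.choose k : ℚ) * ((k + m).choose j) * _root_.bernoulli (k + m - j) = 0 := by
  have hc := congrArg (fun p : ℚ[X] => p.coeff j) (gP_comp_neg m hm)
  simp only [coeff_comp_neg_X, hj.neg_one_pow] at hc
  have hz : (gP m).coeff j = 0 := by linarith [hc]
  have hcoeff : (gP m).coeff j
      = ∑ k ∈ Finset.range (m + 1),
          (m.choose k : ℚ) * ((k + m).choose j) * _root_.bernoulli (k + m - j) := by
    rw [gP, Polynomial.finset_sum_coeff]
    refine Finset.sum_congr rfl fun k _ => ?_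
    rw [Polynomial.coeff_C_mul, coeff_bernoulli_poly (k + m) j (by omega)]
    ring
  rw [← hcoeff, hz]

end AlzerKwongAux

theorem alzer_kwong_numbers_3 (m : ℕ) (hm : 0 < m) (ν ℓ : ℕ) (hν : ν ≤ m)
    (hℓ : ℓ + ν + 2 ≤ m) :
    ∑ k ∈ (Finset.range m).filter (fun k => Odd (k + m)),
      (m.choose k : ℚ) * ((k + m).choose ν) * ((k + m - ν).choose ℓ) *
        bernoulli (k + m - ν - ℓ) = 0 := by
  set j := ν + ℓ with hjdef
  have hjm : j + 2 ≤ m := by omega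
  -- rewrite each term
  have hterm : ∀ k, k ∈ (Finset.range m).filter (fun k => Odd (k + m)) →
      (m.choose k : ℚ) * ((k + m).choose ν) * ((k + m - ν).choose ℓ) *
          bernoulli (k + m - ν - ℓ)
        = (j.choose ν : ℚ) *
            ((m.choose k : ℚ) * ((k + m).choose j) * bernoulli (k + m - j)) := by
    intro k hk
    have hkm : j ≤ k + m := by omega
    have hnat : (k + m).choose j * j.choose ν = (k + m).choose ν * ((k + m - ν).choose (j - ν)) :=
      Nat.choose_mul (by omega)
    have hjν : j - ν = ℓ := by omega
    rw [hjν] at hnat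
    have hsub : k + m - ν - ℓ = k + m - j := by omega
    rw [hsub]
    have hq : ((k + m).choose j : ℚ) * (j.choose ν : ℚ)
        = ((k + m).choose ν : ℚ) * ((k + m - ν).choose ℓ : ℚ) := by exact_mod_cast hnat
    linear_combination (-(m.choose k : ℚ)) * bernoulli (k + m - j) * hq
  rw [Finset.sum_congr rfl hterm, ← Finset.mul_sum]
  rcases Nat.even_or_odd j with hje | hjo
  · -- j even: every term vanishes
    have : ∀ k ∈ (Finset.range m).filter (fun k => Odd (k + m)),
        (m.choose k : ℚ) * ((k + m).choose j) * bernoulli (k + m - j) = 0 := by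
      intro k hk
      have hodd : Odd (k + m) := (Finset.mem_filter.mp hk).2
      have h1 : Odd (k + m - j) := Nat.Odd.sub_even (by omega) hodd hje
      have h2 : 1 < k + m - j := by omega
      rw [AlzerKwongAux.bern_odd_zero h1 h2]
      ring
    rw [Finset.sum_eq_zero this, mul_zero]
  · -- j odd: extend the sum to the full range and use the key identity
    have hfull : ∑ k ∈ (Finset.range m).filter (fun k => Odd (k + m)),
        (m.choose k : ℚ) * ((k + m).choose j) * bernoulli (k + m - j)
        = ∑ k ∈ Finset.range (m + 1),
            (m.choose k : ℚ) * ((k + m).choose j) * bernoulli (k + m - j) := by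
      rw [Finset.sum_filter, Finset.sum_range_succ]
      have hlast : (m.choose m : ℚ) * ((m + m).choose j) * bernoulli (m + m - j) = 0 := by
        have h1 : Odd (m + m - j) := Nat.Even.sub_odd (by omega) ⟨m, rfl⟩ hjo
        rw [AlzerKwongAux.bern_odd_zero h1 (by omega)]
        ring
      rw [hlast, add_zero]
      refine Finset.sum_congr rfl fun k hk => ?_
      by_cases h : Odd (k + m)
      · simp [h]
      · have heven : Even (k + m) := Nat.not_odd_iff_even.mp h
        have h1 : Odd (k + m - j) := Nat.Even.sub_odd (by omega) heven hjo
        rw [if_neg h, AlzerKwongAux.bern_odd_zero h1 (by omega)]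
        ring
    rw [hfull, AlzerKwongAux.key m j hm hjo (by omega), mul_zero]
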